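/- Let ε ∈ {−1, 1}, let L > 0, let k, M : ℝ → ℝ be continuous, and let E₁, E₂, E₃ : ℝ → ℝ³ be continuously differentiable maps satisfying E₁' = −(1/2)k·E₁ + E₂, E₂' = −k·E₂ + E₃, E₃' = −M·E₁ − ε·E₂ − (3/2)k·E₃, such that det(E₁(t), E₂(t), E₃(t)) ≠ 0 for all t and such that k, M, E₁, E₂, E₃ are all L-periodic. Then ∫₀ᴸ k(t) dt = 0; moreover there exist t₁, t₂ ∈ [0, L) with t₁ ≠ t₂ and k(t₁) = k(t₂) = 0. -/

import Mathlib

open intervalIntegral Set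

lemma aux_sign_stmt13 (k : ℝ → ℝ) (hk : Continuous k) {a b : ℝ}
    (h : ∀ c ∈ Set.Ioo a b, k c ≠ 0)
    (x : ℝ) (hx : x ∈ Set.Ioo a b) (hxp : 0 < k x) :
    ∀ y ∈ Set.Ioo a b, 0 < k y := by
  intro y hy
  rcases lt_trichotomy (k y) 0 with hyn | hy0 | hyp
  · exfalso
    rcases le_total x y with hxy | hyx
    · have hsub := intermediate_value_Icc' hxy hk.continuousOn
      have h0 : (0:ℝ) ∈ Set.Icc (k y) (k x) := ⟨hyn.le, hxp.le⟩
      obtain ⟨c, hc, hc0⟩ := hsub h0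
      exact h c ⟨lt_of_lt_of_le hx.1 hc.1, lt_of_le_of_lt hc.2 hy.2⟩ hc0
    · have hsub := intermediate_value_Icc hyx hk.continuousOn
      have h0 : (0:ℝ) ∈ Set.Icc (k y) (k x) := ⟨hyn.le, hxp.le⟩
      obtain ⟨c, hc, hc0⟩ := hsub h0
      exact h c ⟨lt_of_lt_of_le hy.1 hc.1, lt_of_le_of_lt hc.2 hx.2⟩ hc0
  · exact absurd hy0 (h y hy)
  · exact hyp

lemma aux_zero_stmt13 (k : ℝ → ℝ) (hk : Continuous k) {a b : ℝ} (hab : a < b)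
    (hint : (∫ t in a..b, k t) = 0) : ∃ c ∈ Set.Ioo a b, k c = 0 := by
  by_contra h
  push_neg at h
  have hm : ∃ m ∈ Set.Ioo a b, k m ≠ 0 := ⟨(a+b)/2, ⟨by linarith, by linarith⟩,
    h _ ⟨by linarith, by linarith⟩⟩
  obtain ⟨m, hm, hm0⟩ := hm
  rcases hm0.lt_or_gt with hneg | hpos
  · have hpos' : ∀ y ∈ Set.Ioo a b, 0 < -k y := by
      have := aux_sign_stmt13 (fun t => -k t) hk.neg (fun c hc => neg_ne_zero.2 (h c hc))
        m hm (by simpa using hneg)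
      simpa using this
    have := intervalIntegral_pos_of_pos_on ((hk.neg).intervalIntegrable a b) hpos' hab
    rw [show (∫ x in a..b, (-k) x) = -∫ x in a..b, k x from intervalIntegral.integral_neg, hint] at this
    simp at this
  · have hpos' := aux_sign_stmt13 k hk h m hm hpos
    have := intervalIntegral_pos_of_pos_on (hk.intervalIntegrable a b) hpos' hab
    rw [hint] at this
    exact lt_irrefl _ this

/-- A closed nondegenerate space curve without affine inflection point has
vanishing total first general-affine curvature, hence at least two zeros of
`k` in a period. -/
theorem stmt_13 (ε : ℝ) (hε : ε = 1 ∨ ε = -1) (L : ℝ) (hL : 0 < L)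
    (k M : ℝ → ℝ) (hk : Continuous k) (hM : Continuous M)
    (E₁ E₂ E₃ : ℝ → Fin 3 → ℝ)
    (h1 : ContDiff ℝ 1 E₁) (h2 : ContDiff ℝ 1 E₂) (h3 : ContDiff ℝ 1 E₃)
    (hE₁ : ∀ t, deriv E₁ t = (-(1/2) * k t) • E₁ t + E₂ t)
    (hE₂ : ∀ t, deriv E₂ t = (-(k t)) • E₂ t + E₃ t)
    (hE₃ : ∀ t, deriv E₃ t = (-(M t)) • E₁ t - ε • E₂ t - ((3/2) * k t) • E₃ t)
    (hdet : ∀ t, (Matrix.of ![E₁ t, E₂ t, E₃ t]).det ≠ 0)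
    (hkp : Function.Periodic k L) (hMp : Function.Periodic M L)
    (hE₁p : Function.Periodic E₁ L) (hE₂p : Function.Periodic E₂ L)
    (hE₃p : Function.Periodic E₃ L) :
    (∫ t in (0:ℝ)..L, k t) = 0 ∧
    ∃ t₁ t₂ : ℝ, t₁ ∈ Set.Ico (0:ℝ) L ∧ t₂ ∈ Set.Ico (0:ℝ) L ∧ t₁ ≠ t₂ ∧
      k t₁ = 0 ∧ k t₂ = 0 := by
  have hInt : (∫ t in (0:ℝ)..L, k t) = 0 := by
    set D : ℝ → ℝ := fun s => E₁ s 0 * E₂ s 1 * E₃ s 2 - E₁ s 0 * E₂ s 2 * E₃ s 1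
        - E₁ s 1 * E₂ s 0 * E₃ s 2 + E₁ s 1 * E₂ s 2 * E₃ s 0
        + E₁ s 2 * E₂ s 0 * E₃ s 1 - E₁ s 2 * E₂ s 1 * E₃ s 0 with hD
    have hDdet : ∀ s, D s = (Matrix.of ![E₁ s, E₂ s, E₃ s]).det := by
      intro s
      rw [Matrix.det_fin_three]
      simp [hD, Matrix.of_apply]
    have key : ∀ t, HasDerivAt D (-3 * k t * D t) t := by
      intro t
      have d1 : HasDerivAt E₁ ((-(1/2) * k t) • E₁ t + E₂ t) t := by
        have := (h1.differentiable one_ne_zero t).hasDerivAt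
        rwa [hE₁ t] at this
      have d2 : HasDerivAt E₂ ((-(k t)) • E₂ t + E₃ t) t := by
        have := (h2.differentiable one_ne_zero t).hasDerivAt
        rwa [hE₂ t] at this
      have d3 : HasDerivAt E₃ ((-(M t)) • E₁ t - ε • E₂ t - ((3/2) * k t) • E₃ t) t := by
        have := (h3.differentiable one_ne_zero t).hasDerivAt
        rwa [hE₃ t] at this
      have c1 : ∀ j, HasDerivAt (fun s => E₁ s j) (-(1/2) * k t * E₁ t j + E₂ t j) t := by
        intro j; simpa using hasDerivAt_pi.1 d1 j
      have c2 : ∀ j, HasDerivAt (fun s => E₂ s j) (-(k t) * E₂ t j + E₃ t j) t := by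
        intro j; simpa using hasDerivAt_pi.1 d2 j
      have c3 : ∀ j, HasDerivAt (fun s => E₃ s j)
          (-(M t) * E₁ t j - ε * E₂ t j - (3/2) * k t * E₃ t j) t := by
        intro j; simpa [mul_assoc] using hasDerivAt_pi.1 d3 j
      have H := ((((c1 0).mul (c2 1)).mul (c3 2)).sub (((c1 0).mul (c2 2)).mul (c3 1))).sub
          ((((c1 1).mul (c2 0)).mul (c3 2))) |>.add ((((c1 1).mul (c2 2)).mul (c3 0))) |>.add
          ((((c1 2).mul (c2 0)).mul (c3 1))) |>.sub ((((c1 2).mul (c2 1)).mul (c3 0)))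
      exact H.congr_deriv (by simp only [hD, Pi.mul_apply]; ring)
    set K : ℝ → ℝ := fun s => ∫ u in (0:ℝ)..s, k u with hK
    have hKd : ∀ t, HasDerivAt K (k t) t := by
      intro t
      exact intervalIntegral.integral_hasDerivAt_right (hk.intervalIntegrable 0 t)
        (hk.stronglyMeasurableAtFilter _ _) hk.continuousAt
    set F : ℝ → ℝ := fun s => D s * Real.exp (3 * K s) with hF
    have hFd : ∀ t, HasDerivAt F 0 t := by
      intro t
      have := (key t).mul (((hKd t).const_mul 3).exp)
      exact this.congr_deriv (by ring)
    have hconst : F L = F 0 :=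
      is_const_of_deriv_eq_zero (fun t => (hFd t).differentiableAt)
        (fun t => (hFd t).deriv) L 0
    have hDL : D L = D 0 := by
      simp only [hD]
      have e1 := hE₁p 0; have e2 := hE₂p 0; have e3 := hE₃p 0
      simp only [zero_add] at e1 e2 e3
      rw [e1, e2, e3]
    have hK0 : K 0 = 0 := by simp [hK]
    have hD0 : D 0 ≠ 0 := by rw [hDdet]; exact hdet 0
    have hexp : Real.exp (3 * K L) = 1 := by
      have h' : D 0 * Real.exp (3 * K L) = D 0 * 1 := by
        simpa [hF, hK0, hDL] using hconst
      exact mul_left_cancel₀ hD0 h'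
    have h3KL := (Real.exp_eq_one_iff _).1 hexp
    have : K L = 0 := by linarith
    simpa [hK] using this
  refine ⟨hInt, ?_⟩
  obtain ⟨t₁, ht₁, hkt₁⟩ := aux_zero_stmt13 k hk hL hInt
  have hInt2 : (∫ t in t₁..(t₁ + L), k t) = 0 := by
    rw [hkp.intervalIntegral_add_eq t₁ 0]
    simpa using hInt
  obtain ⟨t₂, ht₂, hkt₂⟩ := aux_zero_stmt13 k hk (by linarith : t₁ < t₁ + L) hInt2
  by_cases hc : t₂ < L
  · exact ⟨t₁, t₂, ⟨ht₁.1.le, ht₁.2⟩, ⟨by linarith [ht₁.1, ht₂.1], hc⟩,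
      (by linarith [ht₂.1] : t₁ ≠ t₂), hkt₁, hkt₂⟩
  · push_neg at hc
    refine ⟨t₁, t₂ - L, ⟨ht₁.1.le, ht₁.2⟩, ⟨by linarith, by linarith [ht₂.2, ht₁.2]⟩,
      (by linarith [ht₂.2] : t₁ ≠ t₂ - L), hkt₁, ?_⟩
    have := hkp (t₂ - L)
    rw [sub_add_cancel] at this
    rw [← this, hkt₂]
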